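/- Let Q^{−1} := (3/2)P + K − I (a positive definite symmetric matrix since μ > 1). Then: (i) for every x ∈ ℝ^N with x̄ ≥ −1, V(x + I₊) ≥ (1/2)⟨x, Q^{−1}x⟩; and (ii) for every x ∈ ℝ^N with |x̄| ≤ 1, (1/4)Σ_k x_k⁴ − |Σ_k x_k³| + (1/2)⟨x, (K + 2I)x⟩ ≥ (1/2)⟨x, Q^{−1}x⟩. -/

import Mathlib

open Real MeasureTheory Matrix Filter

noncomputable section

/-- The discrete Laplacian `K` as an `N × N` matrix:
`(Kx)_k = μ/(4 sin²(π/N)) (2 x_k − x_{k+1} − x_{k−1})` with periodic indices. -/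
def Kdisc (μ : ℝ) (N : ℕ) : Matrix (Fin N) (Fin N) ℝ :=
  Matrix.of fun k l =>
    μ / (4 * Real.sin (Real.pi / N) ^ 2) *
      ((if l = k then 2 else 0) - (if (l : ℕ) = ((k : ℕ) + 1) % N then 1 else 0)
        - (if (l : ℕ) = ((k : ℕ) + (N - 1)) % N then 1 else 0))

/-- The energy `V(x) = (1/4)Σ x_k⁴ + (1/2)⟨x,(K−I)x⟩ + N/4`. -/
def Venergy (μ : ℝ) (N : ℕ) (x : Fin N → ℝ) : ℝ :=
  (1 / 4) * ∑ k, x k ^ 4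
    + (1 / 2) * ∑ k, x k * ((Kdisc μ N).mulVec x k - x k)
    + N / 4

/-- The `k`-th partial derivative `∂_k φ(x)`. -/
def pgrad (N : ℕ) (φ : (Fin N → ℝ) → ℝ) (x : Fin N → ℝ) (k : Fin N) : ℝ :=
  fderiv ℝ φ x (Pi.single k 1)

/-- Squared Euclidean norm of the gradient `|∇φ(x)|²`. -/
def gradSq (N : ℕ) (φ : (Fin N → ℝ) → ℝ) (x : Fin N → ℝ) : ℝ :=
  ∑ k, pgrad N φ x k ^ 2

/-- The Laplacian `Δφ(x) = Σ_k ∂²_k φ(x)`. -/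
def lapl (N : ℕ) (φ : (Fin N → ℝ) → ℝ) (x : Fin N → ℝ) : ℝ :=
  ∑ k, fderiv ℝ (fun y => pgrad N φ y k) x (Pi.single k 1)

/-- The Hessian quadratic form `⟨w, Hess φ(x) w⟩`. -/
def hessQF (N : ℕ) (φ : (Fin N → ℝ) → ℝ) (x w : Fin N → ℝ) : ℝ :=
  fderiv ℝ (fun y => fderiv ℝ φ y w) x w

/-- The orthogonal projection `P` onto the span of `(1,…,1)`, as a matrix. -/
def Pmat (N : ℕ) : Matrix (Fin N) (Fin N) ℝ := Matrix.of fun _ _ => 1 / (N : ℝ)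

/-- The unnormalised equilibrium density `e^{−V(x)/(hN)}`. -/
def dens (μ : ℝ) (N : ℕ) (h : ℝ) (x : Fin N → ℝ) : ℝ :=
  Real.exp (-(Venergy μ N x) / (h * N))

/-- The rescaled potential `f(x) = V(√N x)/(2N)` of the Witten Laplacian. -/
def fWit (μ : ℝ) (N : ℕ) (x : Fin N → ℝ) : ℝ :=
  Venergy μ N (fun k => Real.sqrt N * x k) / (2 * N)

/-- The quasimode `χ(x) = (2/√(2πh)) ∫₀^{x̄} e^{−t²/(2h)} dt`. -/
def chiQ (N : ℕ) (h : ℝ) (x : Fin N → ℝ) : ℝ :=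
  (2 / Real.sqrt (2 * Real.pi * h)) *
    ∫ t in (0:ℝ)..((1 / N) * ∑ j, x j), Real.exp (-t ^ 2 / (2 * h))

/-- The matrix `αP + K + βI`. -/
def Mαβ (μ α β : ℝ) (N : ℕ) : Matrix (Fin N) (Fin N) ℝ :=
  α • Pmat N + Kdisc μ N + β • (1 : Matrix (Fin N) (Fin N) ℝ)

/-- The covariance matrix `Q = (αP + K + βI)⁻¹`. -/
def Qmat (μ α β : ℝ) (N : ℕ) : Matrix (Fin N) (Fin N) ℝ := (Mαβ μ α β N)⁻¹

/-- The generator `L_h φ = −hNΔφ + ∇V·∇φ`. -/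
def Lop (μ : ℝ) (N : ℕ) (h : ℝ) (φ : (Fin N → ℝ) → ℝ) (x : Fin N → ℝ) : ℝ :=
  -(h * N) * lapl N φ x + ∑ k, pgrad N (Venergy μ N) x k * pgrad N φ x k

end

/-- The matrix `Q⁻¹ = (3/2)P + K − I`. -/
noncomputable def Mq (μ : ℝ) (N : ℕ) : Matrix (Fin N) (Fin N) ℝ :=
  (3 / 2 : ℝ) • Pmat N + Kdisc μ N - 1




lemma norm_exp_theta (θ : ℝ) : ‖Complex.exp (↑θ * Complex.I) - 1‖ ^ 2 = 2 - 2 * Real.cos θ := by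
  rw [Complex.sq_norm, Complex.normSq_apply]
  simp [Complex.exp_ofReal_mul_I_re, Complex.exp_ofReal_mul_I_im]
  nlinarith [Real.sin_sq_add_cos_sq θ]

variable {N : ℕ} [NeZero N]

lemma conj_char (j : ZMod N) :
    (starRingEnd ℂ) (ZMod.stdAddChar j) = ZMod.stdAddChar (-j) := by
  have h1 : j = ((j.val : ℤ) : ZMod N) := by push_cast [ZMod.natCast_zmod_val]; rfl
  rw [h1, ← Int.cast_neg, ZMod.stdAddChar_coe, ZMod.stdAddChar_coe, ← Complex.exp_conj]
  congr 1
  rw [map_div₀, _root_.map_mul, _root_.map_mul, _root_.map_mul, Complex.conj_I,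
    Complex.conj_ofReal, map_ofNat, map_natCast, map_intCast]
  push_cast
  ring

lemma char_sum (t : ZMod N) :
    ∑ j : ZMod N, ZMod.stdAddChar (t * j) = if t = 0 then (N : ℂ) else 0 := by
  split_ifs with h
  · simp [h, AddChar.map_zero_eq_one, Finset.card_univ]
  · have h2 := AddChar.sum_eq_zero_of_ne_one (ZMod.isPrimitive_stdAddChar N h)
    simpa [AddChar.mulShift_apply] using h2


/-- The (finite) Fourier transform of a real sequence. -/
noncomputable def Fdft (y : ZMod N → ℝ) (j : ZMod N) : ℂ :=
  ∑ k, (y k : ℂ) * ZMod.stdAddChar (j * k)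

lemma Fdft_zero_eq (y : ZMod N → ℝ) : Fdft y 0 = ((∑ k, y k : ℝ) : ℂ) := by
  simp [Fdft, AddChar.map_zero_eq_one]

lemma parseval (y : ZMod N → ℝ) :
    ∑ j, ‖Fdft y j‖ ^ 2 = (N : ℝ) * ∑ k, y k ^ 2 := by
  have key : ∑ j, (Fdft y j * (starRingEnd ℂ) (Fdft y j)) = (N : ℂ) * ∑ k, ((y k : ℂ)) ^ 2 := by
    have expand : ∀ j : ZMod N, Fdft y j * (starRingEnd ℂ) (Fdft y j)
        = ∑ k, ∑ l, (y k : ℂ) * (y l : ℂ) * ZMod.stdAddChar ((k - l) * j) := by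
      intro j
      rw [Fdft, map_sum, Finset.sum_mul_sum]
      refine Finset.sum_congr rfl fun k _ => Finset.sum_congr rfl fun l _ => ?_
      rw [map_mul (starRingEnd ℂ), Complex.conj_ofReal, conj_char]
      have : ZMod.stdAddChar (j * k) * ZMod.stdAddChar (-(j * l))
          = ZMod.stdAddChar ((k - l) * j) := by
        rw [← AddChar.map_add_eq_mul]; congr 1; ring
      calc (y k : ℂ) * ZMod.stdAddChar (j * k) * ((y l : ℂ) * ZMod.stdAddChar (-(j * l)))
          = (y k : ℂ) * (y l : ℂ) * (ZMod.stdAddChar (j * k) * ZMod.stdAddChar (-(j * l))) := by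
            ring
        _ = _ := by rw [this]
    rw [Finset.sum_congr rfl fun j _ => expand j, Finset.sum_comm]
    rw [Finset.sum_congr rfl fun k (_ : k ∈ Finset.univ) => Finset.sum_comm]
    have inner : ∀ k : ZMod N, (∑ l, ∑ j, (y k : ℂ) * (y l : ℂ) * ZMod.stdAddChar ((k - l) * j))
        = (N : ℂ) * (y k : ℂ) ^ 2 := by
      intro k
      have h1 : ∀ l : ZMod N, (∑ j, (y k : ℂ) * (y l : ℂ) * ZMod.stdAddChar ((k - l) * j))
          = (y k : ℂ) * (y l : ℂ) * (if k - l = 0 then (N : ℂ) else 0) := by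
        intro l
        rw [← Finset.mul_sum, char_sum]
      rw [Finset.sum_congr rfl fun l _ => h1 l]
      have h2 : ∀ l : ZMod N, (y k : ℂ) * (y l : ℂ) * (if k - l = 0 then (N : ℂ) else 0)
          = if l = k then (y k : ℂ) * (y l : ℂ) * N else 0 := by
        intro l
        rcases eq_or_ne l k with h | h
        · simp [h]
        · simp [h, sub_eq_zero]
          exact fun h' => absurd h'.symm h
      rw [Finset.sum_congr rfl fun l _ => h2 l, Finset.sum_ite_eq' Finset.univ k]
      simp only [Finset.mem_univ, if_true]
      ring
    rw [Finset.sum_congr rfl fun k _ => inner k, ← Finset.mul_sum]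
  have lhs : ∀ j : ZMod N, Fdft y j * (starRingEnd ℂ) (Fdft y j) = ((‖Fdft y j‖ ^ 2 : ℝ) : ℂ) := by
    intro j
    rw [Complex.mul_conj, Complex.normSq_eq_norm_sq]
  rw [Finset.sum_congr rfl fun j _ => lhs j] at key
  exact_mod_cast key

lemma Fdft_shift (y : ZMod N → ℝ) (j : ZMod N) :
    Fdft (fun k => y (k + 1) - y k) j = (ZMod.stdAddChar (-j) - 1) * Fdft y j := by
  have h1 : ∑ k : ZMod N, ((y (k + 1) : ℝ) : ℂ) * ZMod.stdAddChar (j * k)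
      = ZMod.stdAddChar (-j) * Fdft y j := by
    rw [Fdft, Finset.mul_sum]
    refine Fintype.sum_equiv (Equiv.addRight (1 : ZMod N)) _ _ fun k => ?_
    have hc : ZMod.stdAddChar (-j) * ZMod.stdAddChar (j * (k + 1)) = ZMod.stdAddChar (j * k) := by
      rw [← AddChar.map_add_eq_mul]; congr 1; ring
    simp only [Equiv.coe_addRight]
    rw [show ZMod.stdAddChar (-j) * ((y (k + 1) : ℂ) * ZMod.stdAddChar (j * (k + 1)))
        = (y (k + 1) : ℂ) * (ZMod.stdAddChar (-j) * ZMod.stdAddChar (j * (k + 1))) from by ring,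
      hc]
  have h2 : Fdft (fun k => y (k + 1) - y k) j
      = (∑ k : ZMod N, ((y (k + 1) : ℝ) : ℂ) * ZMod.stdAddChar (j * k)) - Fdft y j := by
    rw [Fdft, Fdft, ← Finset.sum_sub_distrib]
    refine Finset.sum_congr rfl fun k _ => ?_
    push_cast
    ring
  rw [h2, h1]; ring


lemma sin_mono_aux {N : ℕ} (hN : 2 ≤ N) (w : ℕ) (h1 : 1 ≤ w) (h2 : (w : ℝ) ≤ N / 2) :
    Real.sin (π / N) ≤ Real.sin (π * w / N) := by
  have hNpos : (0 : ℝ) < N := by positivity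
  have hpi := Real.pi_pos
  have hw1 : (1 : ℝ) ≤ w := by exact_mod_cast h1
  have hN2 : (2 : ℝ) ≤ N := by exact_mod_cast hN
  have ha : π / N ∈ Set.Icc (-(π / 2)) (π / 2) := by
    constructor
    · have : (0:ℝ) < π / N := by positivity
      linarith
    · rw [div_le_div_iff₀ hNpos (by norm_num)]
      nlinarith
  have hb : π * w / N ∈ Set.Icc (-(π / 2)) (π / 2) := by
    constructor
    · have : (0:ℝ) ≤ π * w / N := by positivity
      linarith
    · rw [div_le_div_iff₀ hNpos (by norm_num)]
      nlinarith
  refine Real.strictMonoOn_sin.monotoneOn ha hb ?_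
  rw [div_le_div_iff₀ hNpos hNpos]
  nlinarith [mul_nonneg (mul_nonneg hpi.le (sub_nonneg.mpr hw1)) hNpos.le]

lemma sin_mono {N : ℕ} (hN : 2 ≤ N) (v : ℕ) (h1 : 1 ≤ v) (h2 : v < N) :
    Real.sin (π / N) ≤ Real.sin (π * v / N) := by
  have hNpos : (0 : ℝ) < N := by positivity
  by_cases hc : (v : ℝ) ≤ N / 2
  · exact sin_mono_aux hN v h1 hc
  · have hvN : (v : ℝ) ≤ N := by exact_mod_cast h2.le
    have hw : π * v / N = π - π * (N - v : ℕ) / N := by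
      rw [Nat.cast_sub h2.le]
      field_simp
      ring
    rw [hw, Real.sin_pi_sub]
    refine sin_mono_aux hN (N - v) (by omega) ?_
    rw [Nat.cast_sub h2.le]
    linarith [not_le.mp hc]

lemma normbound {N : ℕ} [NeZero N] (hN : 2 ≤ N) (j : ZMod N) (hj : j ≠ 0) :
    4 * Real.sin (π / N) ^ 2 ≤ ‖(ZMod.stdAddChar j : ℂ) - 1‖ ^ 2 := by
  set v := j.val with hv
  have hv2 : v < N := j.val_lt
  have hv1 : 1 ≤ v := by
    rcases Nat.eq_zero_or_pos v with h | h
    · exact absurd ((ZMod.val_eq_zero j).mp h) hj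
    · exact h
  have hch : (ZMod.stdAddChar j : ℂ) = Complex.exp (((2 * π * v / N : ℝ) : ℂ) * Complex.I) := by
    have h1 : j = ((v : ℤ) : ZMod N) := by rw [hv]; push_cast [ZMod.natCast_zmod_val]; rfl
    rw [h1, ZMod.stdAddChar_coe]
    congr 1
    push_cast
    ring
  rw [hch, norm_exp_theta]
  have hcos : Real.cos (2 * π * v / N) = 2 * Real.cos (π * v / N) ^ 2 - 1 := by
    rw [show 2 * π * v / N = 2 * (π * v / N) by ring, Real.cos_two_mul]
  have hs := Real.sin_sq_add_cos_sq (π * v / N)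
  have hmono := sin_mono hN v hv1 hv2
  have hsinpos : 0 < Real.sin (π / N) := by
    apply Real.sin_pos_of_pos_of_lt_pi
    · positivity
    · rw [div_lt_iff₀ (by positivity : (0:ℝ) < N)]
      nlinarith [Real.pi_pos, mul_le_mul_of_nonneg_left (show (2:ℝ) ≤ N from by exact_mod_cast hN)
        Real.pi_pos.le]
  nlinarith

lemma wirtinger {N : ℕ} [NeZero N] (hN : 2 ≤ N) (y : ZMod N → ℝ) (hy : ∑ z, y z = 0) :
    4 * Real.sin (π / N) ^ 2 * ∑ z, y z ^ 2 ≤ ∑ z, (y (z + 1) - y z) ^ 2 := by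
  have hNpos : (0 : ℝ) < N := by positivity
  have hP := parseval y
  have hPz := parseval (fun k => y (k + 1) - y k)
  have hF0 : Fdft y 0 = 0 := by rw [Fdft_zero_eq, hy]; norm_num
  have hsh : ∀ j, ‖Fdft (fun k => y (k + 1) - y k) j‖ ^ 2
      = ‖(ZMod.stdAddChar (-j) : ℂ) - 1‖ ^ 2 * ‖Fdft y j‖ ^ 2 := by
    intro j
    rw [Fdft_shift, norm_mul, mul_pow]
  have bound : ∀ j : ZMod N, 4 * Real.sin (π / N) ^ 2 * ‖Fdft y j‖ ^ 2
      ≤ ‖Fdft (fun k => y (k + 1) - y k) j‖ ^ 2 := by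
    intro j
    rw [hsh]
    by_cases hj : j = 0
    · simp [hj, hF0]
    · exact mul_le_mul_of_nonneg_right (normbound hN (-j) (neg_ne_zero.mpr hj)) (sq_nonneg _)
  have hsum := Finset.sum_le_sum fun j (_ : j ∈ Finset.univ) => bound j
  rw [← Finset.mul_sum, hP, hPz] at hsum
  have := (mul_le_mul_iff_right₀ hNpos).mp (by linarith : (N:ℝ) * (4 * Real.sin (π / N) ^ 2 * ∑ z, y z ^ 2) ≤ (N:ℝ) * ∑ z, (y (z + 1) - y z) ^ 2)
  linarith





variable {N : ℕ}

lemma mod_helper1 (hN : 2 ≤ N) {a : ℕ} (ha : a < N) : ((a + 1) % N + (N - 1)) % N = a := by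
  have h1 : ((a + 1) % N + (N - 1)) % N = ((a + 1) + (N - 1)) % N := by
    conv_rhs => rw [Nat.add_mod]
    rw [Nat.mod_eq_of_lt (show N - 1 < N by omega)]
  rw [h1, show (a + 1) + (N - 1) = a + N from by omega, Nat.add_mod_right, Nat.mod_eq_of_lt ha]

lemma mod_helper2 (hN : 2 ≤ N) {a : ℕ} (ha : a < N) : ((a + (N - 1)) % N + 1) % N = a := by
  have h1 : ((a + (N - 1)) % N + 1) % N = ((a + (N - 1)) + 1) % N := by
    conv_rhs => rw [Nat.add_mod]
    rw [Nat.mod_eq_of_lt (show 1 < N by omega)]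
  rw [h1, show (a + (N - 1)) + 1 = a + N from by omega, Nat.add_mod_right, Nat.mod_eq_of_lt ha]

lemma iff_helper (hN : 2 ≤ N) {a b : ℕ} (ha : a < N) (hb : b < N) :
    b = (a + 1) % N ↔ a = (b + (N - 1)) % N := by
  constructor
  · rintro rfl; exact (mod_helper1 hN ha).symm
  · rintro rfl; exact (mod_helper2 hN hb).symm

/-- cyclic successor on `Fin N`. -/
def fsucc (hN : 2 ≤ N) (k : Fin N) : Fin N := ⟨(k.val + 1) % N, Nat.mod_lt _ (by omega)⟩

/-- cyclic predecessor on `Fin N`. -/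
def fpred (hN : 2 ≤ N) (k : Fin N) : Fin N := ⟨(k.val + (N - 1)) % N, Nat.mod_lt _ (by omega)⟩

variable [NeZero N]

/-- The canonical equivalence `ZMod N ≃ Fin N`. -/
def zequiv : ZMod N ≃ Fin N where
  toFun z := ⟨z.val, z.val_lt⟩
  invFun k := ((k.val : ℕ) : ZMod N)
  left_inv z := ZMod.natCast_zmod_val z
  right_inv k := Fin.ext (ZMod.val_cast_of_lt k.isLt)

lemma zequiv_succ (hN : 2 ≤ N) (z : ZMod N) : zequiv (z + 1) = fsucc hN (zequiv z) := by
  apply Fin.ext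
  haveI : Fact (1 < N) := ⟨by omega⟩
  show (z + 1).val = (z.val + 1) % N
  rw [ZMod.val_add, ZMod.val_one]

lemma zequiv_pred (hN : 2 ≤ N) (z : ZMod N) : zequiv (z - 1) = fpred hN (zequiv z) := by
  apply Fin.ext
  show (z - 1).val = (z.val + (N - 1)) % N
  have h2 : ((N - 1 : ℕ) : ZMod N) = -1 := by
    have hc : ((N - 1 : ℕ) : ZMod N) + 1 = 0 := by
      have h3 : (((N - 1) + 1 : ℕ) : ZMod N) = 0 := by
        rw [show N - 1 + 1 = N from by omega]; exact ZMod.natCast_self N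
      push_cast at h3
      exact h3
    exact eq_neg_of_add_eq_zero_left hc
  have h1 : z - 1 = z + ((N - 1 : ℕ) : ZMod N) := by rw [h2]; ring
  rw [h1, ZMod.val_add, ZMod.val_cast_of_lt (show N - 1 < N by omega)]

lemma cyclic_identity (X : ZMod N → ℝ) :
    ∑ z, X z * (2 * X z - X (z + 1) - X (z - 1)) = ∑ z, (X (z + 1) - X z) ^ 2 := by
  have h1 : ∑ z : ZMod N, X (z + 1) ^ 2 = ∑ z, X z ^ 2 :=
    Fintype.sum_equiv (Equiv.addRight 1) _ _ fun z => rfl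
  have h2 : ∑ z : ZMod N, X z * X (z - 1) = ∑ z, X (z + 1) * X z :=
    Fintype.sum_equiv (Equiv.subRight 1) _ _ fun z => by
      simp only [Equiv.subRight_apply]
      rw [sub_add_cancel]
  have e1 : ∀ z : ZMod N, X z * (2 * X z - X (z + 1) - X (z - 1))
      = 2 * X z ^ 2 - X z * X (z + 1) - X z * X (z - 1) := fun z => by ring
  have e2 : ∀ z : ZMod N, (X (z + 1) - X z) ^ 2
      = X (z + 1) ^ 2 - 2 * (X (z + 1) * X z) + X z ^ 2 := fun z => by ring
  have h3 : ∑ z : ZMod N, X z * X (z + 1) = ∑ z, X (z + 1) * X z :=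
    Finset.sum_congr rfl fun z _ => mul_comm _ _
  rw [Finset.sum_congr rfl fun z _ => e1 z, Finset.sum_congr rfl fun z _ => e2 z,
    Finset.sum_sub_distrib, Finset.sum_sub_distrib, Finset.sum_add_distrib,
    Finset.sum_sub_distrib, h1, h2, h3, ← Finset.mul_sum, ← Finset.mul_sum]
  ring

lemma cyclic_sum (X : ZMod N → ℝ) :
    ∑ z, (2 * X z - X (z + 1) - X (z - 1)) = 0 := by
  have h1 : ∑ z : ZMod N, X (z + 1) = ∑ z, X z :=
    Fintype.sum_equiv (Equiv.addRight 1) _ _ fun z => rfl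
  have h2 : ∑ z : ZMod N, X (z - 1) = ∑ z, X z :=
    Fintype.sum_equiv (Equiv.subRight 1) _ _ fun z => rfl
  rw [Finset.sum_sub_distrib, Finset.sum_sub_distrib, h1, h2, ← Finset.mul_sum]
  ring

lemma sum_sq_dev {ι : Type*} [Fintype ι] (f : ι → ℝ) (s : ℝ) :
    ∑ i, (f i - s) ^ 2 = ∑ i, f i ^ 2 - 2 * s * (∑ i, f i) + (Fintype.card ι) * s ^ 2 := by
  have e : ∀ i, (f i - s) ^ 2 = f i ^ 2 - 2 * s * f i + s ^ 2 := fun i => by ring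
  rw [Finset.sum_congr rfl fun i _ => e i, Finset.sum_add_distrib, Finset.sum_sub_distrib,
    ← Finset.mul_sum, Finset.sum_const, Finset.card_univ, nsmul_eq_mul]



namespace QLB

open Matrix

variable {N : ℕ}

lemma K_mulVec (μ : ℝ) (hN : 2 ≤ N) (x : Fin N → ℝ) (k : Fin N) :
    (Kdisc μ N).mulVec x k
      = μ / (4 * Real.sin (π / N) ^ 2) * (2 * x k - x (fsucc hN k) - x (fpred hN k)) := by
  have e1 : ∀ l : Fin N, ((l : ℕ) = ((k : ℕ) + 1) % N) = (l = fsucc hN k) := fun l =>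
    propext ⟨fun h => Fin.ext h, fun h => congrArg Fin.val h⟩
  have e2 : ∀ l : Fin N, ((l : ℕ) = ((k : ℕ) + (N - 1)) % N) = (l = fpred hN k) := fun l =>
    propext ⟨fun h => Fin.ext h, fun h => congrArg Fin.val h⟩
  unfold Kdisc Matrix.mulVec dotProduct
  simp only [Matrix.of_apply, e1, e2]
  have hsummand : ∀ l : Fin N,
      (μ / (4 * Real.sin (π / N) ^ 2) *
        ((if l = k then 2 else 0) - (if l = fsucc hN k then 1 else 0)
          - (if l = fpred hN k then 1 else 0))) * x l
      = μ / (4 * Real.sin (π / N) ^ 2) *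
          ((if l = k then 2 * x l else 0) - (if l = fsucc hN k then x l else 0)
            - (if l = fpred hN k then x l else 0)) := by
    intro l; split_ifs <;> ring
  rw [Finset.sum_congr rfl fun l _ => hsummand l, ← Finset.mul_sum,
    Finset.sum_sub_distrib, Finset.sum_sub_distrib,
    Finset.sum_ite_eq' Finset.univ k, Finset.sum_ite_eq' Finset.univ (fsucc hN k),
    Finset.sum_ite_eq' Finset.univ (fpred hN k)]
  simp

lemma sin_pi_div_pos (hN : 2 ≤ N) : 0 < Real.sin (π / N) := by
  apply Real.sin_pos_of_pos_of_lt_pi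
  · have : (0:ℝ) < N := by positivity
    positivity
  · rw [div_lt_iff₀ (by positivity : (0:ℝ) < N)]
    nlinarith [Real.pi_pos, mul_le_mul_of_nonneg_left (show (2:ℝ) ≤ N from by exact_mod_cast hN)
      Real.pi_pos.le]

variable [NeZero N]

lemma K_quad (μ : ℝ) (hN : 2 ≤ N) (x : Fin N → ℝ) :
    ∑ k, x k * (Kdisc μ N).mulVec x k
      = μ / (4 * Real.sin (π / N) ^ 2)
          * ∑ z : ZMod N, (x (zequiv (z + 1)) - x (zequiv z)) ^ 2 := by
  rw [← Equiv.sum_comp (zequiv (N := N)) (fun k => x k * (Kdisc μ N).mulVec x k)]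
  rw [Finset.sum_congr rfl fun z _ => by
    rw [K_mulVec μ hN, ← zequiv_succ hN, ← zequiv_pred hN]]
  have h0 := cyclic_identity (N := N) (fun z => x (zequiv z))
  rw [Finset.sum_congr rfl fun z (_ : z ∈ Finset.univ) =>
    show x (zequiv z) * (μ / (4 * Real.sin (π / N) ^ 2)
          * (2 * x (zequiv z) - x (zequiv (z + 1)) - x (zequiv (z - 1))))
        = μ / (4 * Real.sin (π / N) ^ 2) * (x (zequiv z)
          * (2 * x (zequiv z) - x (zequiv (z + 1)) - x (zequiv (z - 1)))) from by ring,
    ← Finset.mul_sum, h0]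

lemma K_colsum (μ : ℝ) (hN : 2 ≤ N) (x : Fin N → ℝ) :
    ∑ k, (Kdisc μ N).mulVec x k = 0 := by
  rw [← Equiv.sum_comp (zequiv (N := N)) (fun k => (Kdisc μ N).mulVec x k)]
  rw [Finset.sum_congr rfl fun z _ => by
    rw [K_mulVec μ hN, ← zequiv_succ hN, ← zequiv_pred hN]]
  have h0 := cyclic_sum (N := N) (fun z => x (zequiv z))
  rw [← Finset.mul_sum, h0, mul_zero]

lemma sum_sq_sub_avg (hN : 2 ≤ N) (x : Fin N → ℝ) :
    ∑ k, (x k - (∑ j, x j) / N) ^ 2 = ∑ k, x k ^ 2 - (∑ j, x j) ^ 2 / N := by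
  have hNpos : (0:ℝ) < N := by positivity
  rw [sum_sq_dev, Fintype.card_fin]
  field_simp
  ring

lemma K_quad_lower (μ : ℝ) (hμ : 1 < μ) (hN : 2 ≤ N) (x : Fin N → ℝ) :
    μ * (∑ k, x k ^ 2 - (∑ j, x j) ^ 2 / N) ≤ ∑ k, x k * (Kdisc μ N).mulVec x k := by
  have hNpos : (0:ℝ) < N := by positivity
  have hsin := sin_pi_div_pos hN
  set s : ℝ := (∑ j, x j) / N with hsdef
  set X : ZMod N → ℝ := fun z => x (zequiv z) with hX
  have hXsum : ∑ z, X z = ∑ k, x k := Equiv.sum_comp zequiv x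
  have hXsq : ∑ z, X z ^ 2 = ∑ k, x k ^ 2 := Equiv.sum_comp zequiv (fun k => x k ^ 2)
  have hY : ∑ z, (X z - s) = 0 := by
    rw [Finset.sum_sub_distrib, hXsum, Finset.sum_const, Finset.card_univ, ZMod.card,
      nsmul_eq_mul, hsdef]
    field_simp
    ring
  have hw := wirtinger hN (fun z => X z - s) hY
  have hrw : ∑ z : ZMod N, ((X (z + 1) - s) - (X z - s)) ^ 2
      = ∑ z : ZMod N, (X (z + 1) - X z) ^ 2 :=
    Finset.sum_congr rfl fun z _ => by ring
  rw [hrw] at hw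
  have hdev : ∑ z, (X z - s) ^ 2 = ∑ k, x k ^ 2 - (∑ j, x j) ^ 2 / N := by
    rw [sum_sq_dev, hXsq, hXsum, ZMod.card, hsdef]
    field_simp
    ring
  rw [hdev] at hw
  have hKq := K_quad μ hN x
  have hcpos : 0 < μ / (4 * Real.sin (π / N) ^ 2) := by
    apply div_pos (by linarith) (by positivity)
  have step := mul_le_mul_of_nonneg_left hw hcpos.le
  have hc4 : μ / (4 * Real.sin (π / N) ^ 2) * (4 * Real.sin (π / N) ^ 2
      * (∑ k, x k ^ 2 - (∑ j, x j) ^ 2 / N)) = μ * (∑ k, x k ^ 2 - (∑ j, x j) ^ 2 / N) := by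
    field_simp
  rw [hc4] at step
  rw [hKq]
  exact step

lemma P_quad (x : Fin N → ℝ) :
    x ⬝ᵥ (Pmat N).mulVec x = (∑ j, x j) ^ 2 / N := by
  have hP : ∀ k, (Pmat N).mulVec x k = (∑ l, x l) / N := by
    intro k
    unfold Pmat Matrix.mulVec dotProduct
    simp only [Matrix.of_apply]
    rw [Finset.sum_congr rfl (fun l _ => show 1 / (N:ℝ) * x l = x l * (1/N) from by ring),
      ← Finset.sum_mul]
    ring
  unfold dotProduct
  rw [Finset.sum_congr rfl fun k _ => by rw [hP k], ← Finset.sum_mul]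
  ring

lemma Mq_quad (μ : ℝ) (hN : 2 ≤ N) (x : Fin N → ℝ) :
    x ⬝ᵥ (Mq μ N).mulVec x
      = (3/2) * ((∑ j, x j) ^ 2 / N) + ∑ k, x k * (Kdisc μ N).mulVec x k - ∑ k, x k ^ 2 := by
  unfold Mq
  rw [Matrix.sub_mulVec, Matrix.add_mulVec, Matrix.smul_mulVec, Matrix.one_mulVec,
    dotProduct_sub, dotProduct_add, dotProduct_smul]
  have hK : x ⬝ᵥ (Kdisc μ N).mulVec x = ∑ k, x k * (Kdisc μ N).mulVec x k := rfl
  have hI : x ⬝ᵥ x = ∑ k, x k ^ 2 := Finset.sum_congr rfl fun k _ => (sq (x k)).symm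
  rw [P_quad, hK, hI, smul_eq_mul]

lemma core_ineq (hN : 2 ≤ N) (ε : ℝ) (hε : ε = 1 ∨ ε = -1) (x : Fin N → ℝ)
    (hs : -1 ≤ ε * ((∑ j, x j) / N)) :
    (3/4) * ((∑ j, x j) ^ 2 / N) ≤ ∑ k, ((1/4) * x k ^ 4 + ε * x k ^ 3 + (3/2) * x k ^ 2) := by
  have hNpos : (0:ℝ) < N := by positivity
  set s : ℝ := (∑ j, x j) / N with hsdef
  have hNs : (N:ℝ) * s = ∑ j, x j := by rw [hsdef]; field_simp
  have point : ∀ t : ℝ, (1/4) * s^4 + ε * s^3 + (3/2) * s^2 + (s^3 + 3*ε*s^2 + 3*s) * (t - s)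
      ≤ (1/4) * t^4 + ε * t^3 + (3/2) * t^2 := by
    intro t
    rcases hε with h | h <;> subst h <;>
      nlinarith [sq_nonneg ((t-s)^2 + 2*(s+1)*(t-s)), sq_nonneg ((s+1)*(t-s)),
        sq_nonneg ((t-s)^2 + 2*(s-1)*(t-s)), sq_nonneg ((s-1)*(t-s))]
  have hsum := Finset.sum_le_sum fun k (_ : k ∈ Finset.univ) => point (x k)
  have hL : ∑ k : Fin N, ((1/4) * s^4 + ε * s^3 + (3/2) * s^2 + (s^3 + 3*ε*s^2 + 3*s) * (x k - s))
      = (N:ℝ) * ((1/4) * s^4 + ε * s^3 + (3/2) * s^2) := by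
    rw [Finset.sum_add_distrib, Finset.sum_const, Finset.card_univ, Fintype.card_fin,
      nsmul_eq_mul, ← Finset.mul_sum, Finset.sum_sub_distrib, Finset.sum_const,
      Finset.card_univ, Fintype.card_fin, nsmul_eq_mul, ← hNs]
    ring
  rw [hL] at hsum
  have hgoal : (3/4) * ((∑ j, x j) ^ 2 / N) = (N:ℝ) * ((3/4) * s^2) := by
    rw [← hNs]; field_simp
  rw [hgoal]
  refine le_trans ?_ hsum
  have hps : (3/4) * s^2 ≤ (1/4) * s^4 + ε * s^3 + (3/2) * s^2 := by
    rcases hε with h | h <;> subst h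
    · have h1 : -1 ≤ s := by linarith [hs]
      nlinarith [mul_nonneg (mul_nonneg (sq_nonneg s) (by linarith : (0:ℝ) ≤ s + 1))
        (by linarith : (0:ℝ) ≤ s + 3)]
    · have h1 : s ≤ 1 := by nlinarith [hs]
      nlinarith [mul_nonneg (mul_nonneg (sq_nonneg s) (by linarith : (0:ℝ) ≤ 1 - s))
        (by linarith : (0:ℝ) ≤ 3 - s)]
  exact mul_le_mul_of_nonneg_left hps hNpos.le

lemma Venergy_shift (μ : ℝ) (hN : 2 ≤ N) (x : Fin N → ℝ) :
    Venergy μ N (fun k => x k + 1)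
      = (1/4) * ∑ k, (x k + 1)^4 + (1/2) * (∑ k, x k * (Kdisc μ N).mulVec x k)
        - (1/2) * ∑ k, (x k + 1)^2 + N/4 := by
  unfold Venergy
  have hKsh : ∀ k, (Kdisc μ N).mulVec (fun k => x k + 1) k = (Kdisc μ N).mulVec x k := by
    intro k; rw [K_mulVec μ hN, K_mulVec μ hN]; ring
  have hmid : ∑ k, (x k + 1) * ((Kdisc μ N).mulVec (fun k => x k + 1) k - (x k + 1))
      = ∑ k, x k * (Kdisc μ N).mulVec x k + ∑ k, (Kdisc μ N).mulVec x k
        - ∑ k, (x k + 1)^2 := by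
    rw [Finset.sum_congr rfl fun k _ => by rw [hKsh k]]
    have e : ∀ k, (x k + 1) * ((Kdisc μ N).mulVec x k - (x k + 1))
        = (x k * (Kdisc μ N).mulVec x k + (Kdisc μ N).mulVec x k) - (x k + 1)^2 :=
      fun k => by ring
    rw [Finset.sum_congr rfl fun k _ => e k, Finset.sum_sub_distrib, Finset.sum_add_distrib]
  rw [hmid, K_colsum μ hN x]
  ring

lemma Kdisc_isHermitian (μ : ℝ) (hN : 2 ≤ N) : (Kdisc μ N).IsHermitian := by
  ext k l
  simp only [Matrix.conjTranspose_apply, star_trivial]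
  unfold Kdisc
  simp only [Matrix.of_apply]
  have h1 : ((k:ℕ) = ((l:ℕ) + 1) % N) = ((l:ℕ) = ((k:ℕ) + (N-1)) % N) :=
    propext (iff_helper hN l.isLt k.isLt)
  have h2 : ((k:ℕ) = ((l:ℕ) + (N-1)) % N) = ((l:ℕ) = ((k:ℕ) + 1) % N) :=
    propext (iff_helper hN k.isLt l.isLt).symm
  have h3 : (k = l) = (l = k) := propext eq_comm
  simp only [h1, h2, h3]
  ring

lemma Kdisc_symm_entry (μ : ℝ) (hN : 2 ≤ N) (k l : Fin N) :
    Kdisc μ N l k = Kdisc μ N k l := by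
  have := Kdisc_isHermitian μ hN
  calc Kdisc μ N l k = (Kdisc μ N)ᴴ k l := by
        rw [Matrix.conjTranspose_apply, star_trivial]
    _ = Kdisc μ N k l := by rw [this]

lemma Mq_isHermitian (μ : ℝ) (hN : 2 ≤ N) : (Mq μ N).IsHermitian := by
  ext k l
  simp only [Mq, Matrix.conjTranspose_apply, star_trivial, Matrix.sub_apply, Matrix.add_apply,
    Matrix.smul_apply, Matrix.one_apply, smul_eq_mul]
  rw [Kdisc_symm_entry μ hN]
  have hPs : (Pmat N) l k = (Pmat N) k l := rfl
  rw [hPs]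
  congr 1
  exact if_congr eq_comm rfl rfl

end QLB
/-- quadratic lower bounds on the (shifted) energy:
`Q⁻¹ = (3/2)P + K − I` is positive definite, `V(x+I₊) ≥ (1/2)⟨x,Q⁻¹x⟩` when
`x̄ ≥ −1`, and `(1/4)Σx⁴ − |Σx³| + (1/2)⟨x,(K+2I)x⟩ ≥ (1/2)⟨x,Q⁻¹x⟩` when `|x̄| ≤ 1`. -/
theorem quadratic_lower_bounds (μ : ℝ) (hμ : 1 < μ) (N : ℕ) (hN : 2 ≤ N) :
    (Mq μ N).PosDef ∧
    (∀ x : Fin N → ℝ, -1 ≤ (1 / (N : ℝ)) * ∑ j, x j →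
      (1 / 2) * (x ⬝ᵥ (Mq μ N).mulVec x) ≤ Venergy μ N (fun k => x k + 1)) ∧
    (∀ x : Fin N → ℝ, |(1 / (N : ℝ)) * ∑ j, x j| ≤ 1 →
      (1 / 2) * (x ⬝ᵥ (Mq μ N).mulVec x) ≤
        (1 / 4) * ∑ k, x k ^ 4 - |∑ k, x k ^ 3|
          + (1 / 2) * ∑ k, x k * ((Kdisc μ N + 2).mulVec x k)) := by
  haveI : NeZero N := ⟨by omega⟩
  have hNpos : (0:ℝ) < N := by positivity
  refine ⟨Matrix.PosDef.of_dotProduct_mulVec_pos (QLB.Mq_isHermitian μ hN) ?_, ?_, ?_⟩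
  · -- positive definiteness
    intro x hx
    have hstar : star x = x := by
      funext k; exact star_trivial _
    rw [hstar, show (Mq μ N) *ᵥ x = (Mq μ N).mulVec x from rfl]
    have hq := QLB.Mq_quad μ hN x
    rw [show dotProduct x ((Mq μ N).mulVec x) = x ⬝ᵥ (Mq μ N).mulVec x from rfl, hq]
    have hK := QLB.K_quad_lower μ hμ hN x
    have hdev : 0 ≤ ∑ k, x k ^ 2 - (∑ j, x j) ^ 2 / N := by
      rw [← QLB.sum_sq_sub_avg hN x]
      exact Finset.sum_nonneg fun k _ => sq_nonneg _
    have hS2 : 0 < ∑ k, x k ^ 2 := by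
      obtain ⟨k, hk⟩ : ∃ k, x k ≠ 0 := by
        by_contra h; push_neg at h; exact hx (funext h)
      have h1 : 0 < x k ^ 2 := by positivity
      have hle : x k ^ 2 ≤ ∑ k, x k ^ 2 :=
        Finset.single_le_sum (fun i _ => sq_nonneg (x i)) (Finset.mem_univ k)
      linarith
    rcases eq_or_lt_of_le (sq_nonneg (∑ j, x j)) with hS1 | hS1
    · have h0 : (∑ j, x j) ^ 2 / (N:ℝ) = 0 := by rw [← hS1]; simp
      rw [h0] at hK ⊢
      nlinarith
    · have h0 : 0 < (∑ j, x j) ^ 2 / (N:ℝ) := div_pos hS1 hNpos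
      nlinarith
  · -- part (ii)
    intro x hx
    rw [QLB.Mq_quad μ hN x, QLB.Venergy_shift μ hN x]
    have hx' : -1 ≤ 1 * ((∑ j, x j) / N) := by
      rw [show 1 * ((∑ j, x j) / N) = 1 / (N:ℝ) * ∑ j, x j from by ring]
      exact hx
    have hcore := QLB.core_ineq hN 1 (Or.inl rfl) x hx'
    have hexp : ∑ k, ((1/4) * x k ^ 4 + 1 * x k ^ 3 + (3/2) * x k ^ 2)
        = (1/4) * ∑ k, (x k + 1) ^ 4 - (1/2) * ∑ k, (x k + 1) ^ 2 + (N:ℝ)/4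
          + (1/2) * ∑ k, x k ^ 2 := by
      have e : ∑ k, ((1/4) * x k ^ 4 + 1 * x k ^ 3 + (3/2) * x k ^ 2)
          = ∑ k, ((1/4) * (x k + 1) ^ 4 - (1/2) * (x k + 1) ^ 2 + (1/4 : ℝ)
              + (1/2) * x k ^ 2) :=
        Finset.sum_congr rfl fun k _ => by ring
      rw [e, Finset.sum_add_distrib, Finset.sum_add_distrib, Finset.sum_sub_distrib,
        ← Finset.mul_sum, ← Finset.mul_sum, ← Finset.mul_sum, Finset.sum_const,
        Finset.card_univ, Fintype.card_fin, nsmul_eq_mul]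
      ring
    rw [hexp] at hcore
    linarith
  · -- part (iii)
    intro x hx
    rw [QLB.Mq_quad μ hN x]
    have hsum3 : ∑ k, x k * ((Kdisc μ N + 2).mulVec x k)
        = ∑ k, x k * (Kdisc μ N).mulVec x k + 2 * ∑ k, x k ^ 2 := by
      have h2mat : ∀ k, (Kdisc μ N + 2 : Matrix (Fin N) (Fin N) ℝ).mulVec x k
          = (Kdisc μ N).mulVec x k + 2 * x k := by
        intro k
        rw [show (Kdisc μ N + 2 : Matrix (Fin N) (Fin N) ℝ)
            = Kdisc μ N + ((1 : Matrix (Fin N) (Fin N) ℝ) + 1) from by norm_num,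
          Matrix.add_mulVec, Matrix.add_mulVec, Matrix.one_mulVec]
        simp [Pi.add_apply]
        ring
      have e : ∀ k, x k * ((Kdisc μ N).mulVec x k + 2 * x k)
          = x k * (Kdisc μ N).mulVec x k + 2 * x k ^ 2 := fun k => by ring
      rw [Finset.sum_congr rfl fun k _ => by rw [h2mat k, e k], Finset.sum_add_distrib,
        ← Finset.mul_sum]
    have hexp3 : ∀ ε : ℝ, ∑ k, ((1/4) * x k ^ 4 + ε * x k ^ 3 + (3/2) * x k ^ 2)
        = (1/4) * ∑ k, x k ^ 4 + ε * ∑ k, x k ^ 3 + (3/2) * ∑ k, x k ^ 2 := by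
      intro ε
      rw [Finset.sum_add_distrib, Finset.sum_add_distrib, ← Finset.mul_sum, ← Finset.mul_sum,
        ← Finset.mul_sum]
    obtain ⟨hl, hr⟩ := abs_le.mp hx
    rw [show 1 / (N:ℝ) * ∑ j, x j = (∑ j, x j) / N from by ring] at hl hr
    rcases le_or_gt 0 (∑ k, x k ^ 3) with hT | hT
    · rw [abs_of_nonneg hT]
      have hcore := QLB.core_ineq hN (-1) (Or.inr rfl) x (by linarith)
      rw [hexp3 (-1)] at hcore
      linarith
    · rw [abs_of_neg hT]
      have hcore := QLB.core_ineq hN 1 (Or.inl rfl) x (by linarith)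
      rw [hexp3 1] at hcore
      linarith
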